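/- Let P be a nonempty poset satisfying the upper bound property and the lower bound property, K = WithBot (WithTop P), Θ a congruence on K, and E the equivalence relation on P defined by a E b iff (↑a, ↑b) ∈ Θ. On the quotient P/E define partial operations join, meet : P/E → P/E → Option (P/E) by: join [a] [b] = some [c] if there exists c ∈ P with (↑c, ↑a ⊔ ↑b) ∈ Θ, and none otherwise; meet [a] [b] = some [d] if there exists d ∈ P with (↑d, ↑a ⊓ ↑b) ∈ Θ, and none otherwise. Then these operations are well defined (independent of the chosen representatives), and (P/E, join, meet) is a partial lattice: it satisfies strong idempotency, strong commutativity, strong associativity and the duality conditions. -/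

import Mathlib

/-- A poset satisfies the upper bound property if every pair of elements having
an upper bound has a least upper bound. -/
def UBP (P : Type*) [PartialOrder P] : Prop :=
  ∀ a b : P, (∃ u, a ≤ u ∧ b ≤ u) → ∃ c, IsLUB {a, b} c

/-- A poset satisfies the lower bound property if every pair of elements having
a lower bound has a greatest lower bound. -/
def LBP (P : Type*) [PartialOrder P] : Prop :=
  ∀ a b : P, (∃ l, l ≤ a ∧ l ≤ b) → ∃ c, IsGLB {a, b} c

/-- The canonical embedding of `P` into its two-point extension `WithBot (WithTop P)`. -/
def emb {P : Type*} (a : P) : WithBot (WithTop P) := ((a : WithTop P) : WithBot (WithTop P))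

/-- A congruence on a (lattice-ordered) poset `K`: an equivalence relation compatible
with binary suprema and binary infima, expressed via `IsLUB` and `IsGLB`. -/
def IsCongruence {K : Type*} [PartialOrder K] (Θ : K → K → Prop) : Prop :=
  Equivalence Θ ∧
  (∀ a b c d sa sb : K, Θ a b → Θ c d → IsLUB {a, c} sa → IsLUB {b, d} sb → Θ sa sb) ∧
  (∀ a b c d ia ib : K, Θ a b → Θ c d → IsGLB {a, c} ia → IsGLB {b, d} ib → Θ ia ib)

/-- A partial lattice: a type `L` with partial binary operations `join` and `meet`
(valued in `Option L`) satisfying strong idempotency, strong commutativity,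
strong associativity and the duality conditions. -/
structure IsPartialLattice {L : Type*} (join meet : L → L → Option L) : Prop where
  join_idem : ∀ a, join a a = some a
  meet_idem : ∀ a, meet a a = some a
  join_comm : ∀ a b, join a b = join b a
  meet_comm : ∀ a b, meet a b = meet b a
  join_assoc : ∀ a b c, (join a b).bind (fun d => join d c) = (join b c).bind (fun d => join a d)
  meet_assoc : ∀ a b c, (meet a b).bind (fun d => meet d c) = (meet b c).bind (fun d => meet a d)
  dual_join : ∀ a b, join a b = some a → meet a b = some b
  dual_meet : ∀ a b, meet a b = some a → join a b = some b

section QPLAux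

variable {P : Type*} [PartialOrder P]

theorem qpl_emb_le_emb {a b : P} : emb a ≤ emb b ↔ a ≤ b := by
  simp [emb]

theorem qpl_all_le_top (z : WithBot (WithTop P)) :
    z ≤ ((⊤ : WithTop P) : WithBot (WithTop P)) := by
  induction z using WithBot.recBotCoe with
  | bot => exact bot_le
  | coe x => exact WithBot.coe_le_coe.2 le_top

theorem qpl_lub_of_le {K : Type*} [Preorder K] {x y : K} (h : x ≤ y) : IsLUB {x, y} y := by
  constructor
  · intro z hz
    simp only [Set.mem_insert_iff, Set.mem_singleton_iff] at hz
    rcases hz with rfl | rfl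
    · exact h
    · exact le_rfl
  · intro z hz
    exact hz (Set.mem_insert_of_mem _ rfl)

theorem qpl_glb_of_le {K : Type*} [Preorder K] {x y : K} (h : x ≤ y) : IsGLB {x, y} x := by
  constructor
  · intro z hz
    simp only [Set.mem_insert_iff, Set.mem_singleton_iff] at hz
    rcases hz with rfl | rfl
    · exact le_rfl
    · exact h
  · intro z hz
    exact hz (Set.mem_insert _ _)

theorem qpl_exists_lub (hUBP : UBP P) (x y : WithBot (WithTop P)) : ∃ s, IsLUB {x, y} s := by
  induction x using WithBot.recBotCoe with
  | bot => exact ⟨y, qpl_lub_of_le bot_le⟩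
  | coe x' =>
    induction y using WithBot.recBotCoe with
    | bot => exact ⟨(x' : WithBot (WithTop P)), Set.pair_comm _ _ ▸ qpl_lub_of_le bot_le⟩
    | coe y' =>
      induction x' using WithTop.recTopCoe with
      | top =>
        exact ⟨_, Set.pair_comm _ _ ▸ qpl_lub_of_le (qpl_all_le_top _)⟩
      | coe a =>
        induction y' using WithTop.recTopCoe with
        | top => exact ⟨_, qpl_lub_of_le (qpl_all_le_top _)⟩
        | coe b =>
          by_cases h : ∃ u : P, a ≤ u ∧ b ≤ u
          · obtain ⟨c, hc⟩ := hUBP a b h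
            refine ⟨emb c, ?_, ?_⟩
            · intro z hz
              simp only [Set.mem_insert_iff, Set.mem_singleton_iff] at hz
              rcases hz with rfl | rfl
              · exact qpl_emb_le_emb.2 (hc.1 (Set.mem_insert _ _))
              · exact qpl_emb_le_emb.2 (hc.1 (Set.mem_insert_of_mem _ rfl))
            · intro z hz
              have hza : emb a ≤ z := hz (Set.mem_insert _ _)
              have hzb : emb b ≤ z := hz (Set.mem_insert_of_mem _ rfl)
              induction z using WithBot.recBotCoe with
              | bot => exact absurd (le_bot_iff.1 hza) WithBot.coe_ne_bot
              | coe z' =>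
                induction z' using WithTop.recTopCoe with
                | top => exact qpl_all_le_top _
                | coe u =>
                  refine qpl_emb_le_emb.2 (hc.2 ?_)
                  intro w hw
                  simp only [Set.mem_insert_iff, Set.mem_singleton_iff] at hw
                  rcases hw with rfl | rfl
                  · exact qpl_emb_le_emb.1 hza
                  · exact qpl_emb_le_emb.1 hzb
          · refine ⟨((⊤ : WithTop P) : WithBot (WithTop P)), ?_, ?_⟩
            · intro z hz
              exact qpl_all_le_top _
            · intro z hz
              have hza : emb a ≤ z := hz (Set.mem_insert _ _)
              have hzb : emb b ≤ z := hz (Set.mem_insert_of_mem _ rfl)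
              induction z using WithBot.recBotCoe with
              | bot => exact absurd (le_bot_iff.1 hza) WithBot.coe_ne_bot
              | coe z' =>
                induction z' using WithTop.recTopCoe with
                | top => exact le_rfl
                | coe u =>
                  exact absurd ⟨u, qpl_emb_le_emb.1 hza, qpl_emb_le_emb.1 hzb⟩ h

theorem qpl_exists_glb (hLBP : LBP P) (x y : WithBot (WithTop P)) : ∃ s, IsGLB {x, y} s := by
  induction x using WithBot.recBotCoe with
  | bot => exact ⟨⊥, qpl_glb_of_le bot_le⟩
  | coe x' =>
    induction y using WithBot.recBotCoe with
    | bot => exact ⟨⊥, Set.pair_comm _ _ ▸ qpl_glb_of_le bot_le⟩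
    | coe y' =>
      induction x' using WithTop.recTopCoe with
      | top =>
        exact ⟨_, Set.pair_comm _ _ ▸ qpl_glb_of_le (qpl_all_le_top _)⟩
      | coe a =>
        induction y' using WithTop.recTopCoe with
        | top => exact ⟨_, qpl_glb_of_le (qpl_all_le_top _)⟩
        | coe b =>
          by_cases h : ∃ l : P, l ≤ a ∧ l ≤ b
          · obtain ⟨c, hc⟩ := hLBP a b h
            refine ⟨emb c, ?_, ?_⟩
            · intro z hz
              simp only [Set.mem_insert_iff, Set.mem_singleton_iff] at hz
              rcases hz with rfl | rfl
              · exact qpl_emb_le_emb.2 (hc.1 (Set.mem_insert _ _))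
              · exact qpl_emb_le_emb.2 (hc.1 (Set.mem_insert_of_mem _ rfl))
            · intro z hz
              have hza : z ≤ emb a := hz (Set.mem_insert _ _)
              have hzb : z ≤ emb b := hz (Set.mem_insert_of_mem _ rfl)
              induction z using WithBot.recBotCoe with
              | bot => exact bot_le
              | coe z' =>
                induction z' using WithTop.recTopCoe with
                | top =>
                  exact absurd (top_le_iff.1 (WithBot.coe_le_coe.1 hza)) WithTop.coe_ne_top
                | coe u =>
                  refine qpl_emb_le_emb.2 (hc.2 ?_)
                  intro w hw
                  simp only [Set.mem_insert_iff, Set.mem_singleton_iff] at hw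
                  rcases hw with rfl | rfl
                  · exact qpl_emb_le_emb.1 hza
                  · exact qpl_emb_le_emb.1 hzb
          · refine ⟨(⊥ : WithBot (WithTop P)), ?_, ?_⟩
            · intro z hz
              exact bot_le
            · intro z hz
              have hza : z ≤ emb a := hz (Set.mem_insert _ _)
              have hzb : z ≤ emb b := hz (Set.mem_insert_of_mem _ rfl)
              induction z using WithBot.recBotCoe with
              | bot => exact le_rfl
              | coe z' =>
                induction z' using WithTop.recTopCoe with
                | top =>
                  exact absurd (top_le_iff.1 (WithBot.coe_le_coe.1 hza)) WithTop.coe_ne_top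
                | coe u =>
                  exact absurd ⟨u, qpl_emb_le_emb.1 hza, qpl_emb_le_emb.1 hzb⟩ h

noncomputable def qplLattice {K : Type*} [PartialOrder K]
    (h1 : ∀ x y : K, ∃ s, IsLUB {x, y} s) (h2 : ∀ x y : K, ∃ s, IsGLB {x, y} s) :
    Lattice K :=
  { ‹PartialOrder K› with
    sup := fun x y => (h1 x y).choose
    le_sup_left := fun x y => (h1 x y).choose_spec.1 (Set.mem_insert _ _)
    le_sup_right := fun x y => (h1 x y).choose_spec.1 (Set.mem_insert_of_mem _ rfl)
    sup_le := fun x y z hx hy => (h1 x y).choose_spec.2 (by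
      intro w hw
      simp only [Set.mem_insert_iff, Set.mem_singleton_iff] at hw
      rcases hw with rfl | rfl
      exacts [hx, hy])
    inf := fun x y => (h2 x y).choose
    inf_le_left := fun x y => (h2 x y).choose_spec.1 (Set.mem_insert _ _)
    inf_le_right := fun x y => (h2 x y).choose_spec.1 (Set.mem_insert_of_mem _ rfl)
    le_inf := fun x y z hx hy => (h2 y z).choose_spec.2 (by
      intro w hw
      simp only [Set.mem_insert_iff, Set.mem_singleton_iff] at hw
      rcases hw with rfl | rfl
      exacts [hx, hy]) }

end QPLAux

/-- Let `P` be a nonempty poset with the upper and lower bound properties,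
`K = WithBot (WithTop P)`, `Θ` a congruence on `K` and `E` the equivalence relation
`a E b ↔ (↑a, ↑b) ∈ Θ` on `P` (given as a setoid `st`). Then there exist well-defined
partial operations `join` and `meet` on the quotient `P/E` such that
`join [a] [b] = some [c]` iff some `c ∈ P` satisfies `(↑c, ↑a ⊔ ↑b) ∈ Θ` (and `none`
otherwise), dually for `meet`, and these operations make `P/E` a partial lattice. -/

theorem quotient_partialLattice {P : Type*} [PartialOrder P] [Nonempty P]
    (hUBP : UBP P) (hLBP : LBP P)
    (Θ : WithBot (WithTop P) → WithBot (WithTop P) → Prop)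
    (hΘ : IsCongruence Θ)
    (st : Setoid P) (hst : ∀ a b : P, st.r a b ↔ Θ (emb a) (emb b)) :
    ∃ join meet : Quotient st → Quotient st → Option (Quotient st),
      (∀ a b : P, ∀ s : WithBot (WithTop P), IsLUB {emb a, emb b} s →
        (∀ c : P, Θ (emb c) s →
          join (Quotient.mk st a) (Quotient.mk st b) = some (Quotient.mk st c)) ∧
        ((∀ c : P, ¬ Θ (emb c) s) →
          join (Quotient.mk st a) (Quotient.mk st b) = none)) ∧
      (∀ a b : P, ∀ i : WithBot (WithTop P), IsGLB {emb a, emb b} i →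
        (∀ d : P, Θ (emb d) i →
          meet (Quotient.mk st a) (Quotient.mk st b) = some (Quotient.mk st d)) ∧
        ((∀ d : P, ¬ Θ (emb d) i) →
          meet (Quotient.mk st a) (Quotient.mk st b) = none)) ∧
      IsPartialLattice join meet := by
  
  classical
  letI : Lattice (WithBot (WithTop P)) := qplLattice (qpl_exists_lub hUBP) (qpl_exists_glb hLBP)
  obtain ⟨⟨hrefl, hsymm, htrans⟩, hcs, hci⟩ := hΘ
  have congSup : ∀ {x y z w : WithBot (WithTop P)}, Θ x y → Θ z w → Θ (x ⊔ z) (y ⊔ w) :=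
    fun h1 h2 => hcs _ _ _ _ _ _ h1 h2 isLUB_pair isLUB_pair
  have congInf : ∀ {x y z w : WithBot (WithTop P)}, Θ x y → Θ z w → Θ (x ⊓ z) (y ⊓ w) :=
    fun h1 h2 => hci _ _ _ _ _ _ h1 h2 isGLB_pair isGLB_pair
  have supCases : ∀ a b : P, (∃ u : P, emb a ⊔ emb b = emb u) ∨
      emb a ⊔ emb b = ((⊤ : WithTop P) : WithBot (WithTop P)) := by
    intro a b
    cases hx : (emb a ⊔ emb b) with
    | bot =>
      have h1 : emb a ≤ emb a ⊔ emb b := le_sup_left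
      rw [hx] at h1
      exact absurd (le_bot_iff.1 h1) WithBot.coe_ne_bot
    | coe x =>
      cases x with
      | top => exact Or.inr rfl
      | coe u => exact Or.inl ⟨u, rfl⟩
  have infCases : ∀ a b : P, (∃ u : P, emb a ⊓ emb b = emb u) ∨
      emb a ⊓ emb b = (⊥ : WithBot (WithTop P)) := by
    intro a b
    cases hx : (emb a ⊓ emb b) with
    | bot => exact Or.inr rfl
    | coe x =>
      cases x with
      | top =>
        have h1 : emb a ⊓ emb b ≤ emb a := inf_le_left
        rw [hx] at h1
        exact absurd (top_le_iff.1 (WithBot.coe_le_coe.1 h1)) WithTop.coe_ne_top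
      | coe u => exact Or.inl ⟨u, rfl⟩
  have keyJoin : ∀ (u v : P) (s : WithBot (WithTop P)), emb u ⊔ emb v ≤ s →
      (∃ e : P, Θ (emb e) s) → ∃ d : P, Θ (emb d) (emb u ⊔ emb v) := by
    intro u v s hle hex
    obtain ⟨e, he⟩ := hex
    rcases supCases u v with ⟨w, hw⟩ | htop
    · exact ⟨w, by rw [hw]; exact hrefl _⟩
    · refine ⟨e, ?_⟩
      have h1 : Θ (emb e ⊓ (emb u ⊔ emb v)) (s ⊓ (emb u ⊔ emb v)) := congInf he (hrefl _)
      rwa [inf_eq_right.2 hle, inf_eq_left.2 (by rw [htop]; exact qpl_all_le_top _)] at h1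
  have keyMeet : ∀ (u v : P) (s : WithBot (WithTop P)), s ≤ emb u ⊓ emb v →
      (∃ e : P, Θ (emb e) s) → ∃ d : P, Θ (emb d) (emb u ⊓ emb v) := by
    intro u v s hle hex
    obtain ⟨e, he⟩ := hex
    rcases infCases u v with ⟨w, hw⟩ | hbot
    · exact ⟨w, by rw [hw]; exact hrefl _⟩
    · refine ⟨e, ?_⟩
      have h1 : Θ (emb e ⊔ (emb u ⊓ emb v)) (s ⊔ (emb u ⊓ emb v)) := congSup he (hrefl _)
      rwa [sup_eq_right.2 hle, sup_eq_left.2 (show emb u ⊓ emb v ≤ emb e by rw [hbot]; exact bot_le)] at h1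
  obtain ⟨J, hJs, hJn⟩ : ∃ J : Quotient st → Quotient st → Option (Quotient st),
      (∀ a b c : P, Θ (emb c) (emb a ⊔ emb b) →
        J (Quotient.mk st a) (Quotient.mk st b) = some (Quotient.mk st c)) ∧
      (∀ a b : P, (∀ c : P, ¬ Θ (emb c) (emb a ⊔ emb b)) →
        J (Quotient.mk st a) (Quotient.mk st b) = none) := by
    refine ⟨Quotient.lift₂
      (fun a b => if h : ∃ c : P, Θ (emb c) (emb a ⊔ emb b) then
        some (Quotient.mk st h.choose) else none) ?_, ?_, ?_⟩
    · intro a₁ b₁ a₂ b₂ ha hb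
      have hs : Θ (emb a₁ ⊔ emb b₁) (emb a₂ ⊔ emb b₂) :=
        congSup ((hst _ _).1 ha) ((hst _ _).1 hb)
      by_cases h1 : ∃ c : P, Θ (emb c) (emb a₁ ⊔ emb b₁)
      · have h2 : ∃ c : P, Θ (emb c) (emb a₂ ⊔ emb b₂) := ⟨h1.choose, htrans h1.choose_spec hs⟩
        simp only [dif_pos h1, dif_pos h2]
        exact congrArg some (Quotient.sound ((hst _ _).2
          (htrans h1.choose_spec (htrans hs (hsymm h2.choose_spec)))))
      · have h2 : ¬ ∃ c : P, Θ (emb c) (emb a₂ ⊔ emb b₂) :=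
          fun ⟨c, hc⟩ => h1 ⟨c, htrans hc (hsymm hs)⟩
        simp only [dif_neg h1, dif_neg h2]
    · intro a b c hc
      have h1 : ∃ c : P, Θ (emb c) (emb a ⊔ emb b) := ⟨c, hc⟩
      show (if h : ∃ c : P, Θ (emb c) (emb a ⊔ emb b) then
        some (Quotient.mk st h.choose) else none) = some (Quotient.mk st c)
      rw [dif_pos h1]
      exact congrArg some (Quotient.sound ((hst _ _).2 (htrans h1.choose_spec (hsymm hc))))
    · intro a b hn
      show (if h : ∃ c : P, Θ (emb c) (emb a ⊔ emb b) then
        some (Quotient.mk st h.choose) else none) = none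
      exact dif_neg (not_exists.2 hn)
  obtain ⟨M, hMs, hMn⟩ : ∃ M : Quotient st → Quotient st → Option (Quotient st),
      (∀ a b c : P, Θ (emb c) (emb a ⊓ emb b) →
        M (Quotient.mk st a) (Quotient.mk st b) = some (Quotient.mk st c)) ∧
      (∀ a b : P, (∀ c : P, ¬ Θ (emb c) (emb a ⊓ emb b)) →
        M (Quotient.mk st a) (Quotient.mk st b) = none) := by
    refine ⟨Quotient.lift₂
      (fun a b => if h : ∃ c : P, Θ (emb c) (emb a ⊓ emb b) then
        some (Quotient.mk st h.choose) else none) ?_, ?_, ?_⟩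
    · intro a₁ b₁ a₂ b₂ ha hb
      have hs : Θ (emb a₁ ⊓ emb b₁) (emb a₂ ⊓ emb b₂) :=
        congInf ((hst _ _).1 ha) ((hst _ _).1 hb)
      by_cases h1 : ∃ c : P, Θ (emb c) (emb a₁ ⊓ emb b₁)
      · have h2 : ∃ c : P, Θ (emb c) (emb a₂ ⊓ emb b₂) := ⟨h1.choose, htrans h1.choose_spec hs⟩
        simp only [dif_pos h1, dif_pos h2]
        exact congrArg some (Quotient.sound ((hst _ _).2
          (htrans h1.choose_spec (htrans hs (hsymm h2.choose_spec)))))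
      · have h2 : ¬ ∃ c : P, Θ (emb c) (emb a₂ ⊓ emb b₂) :=
          fun ⟨c, hc⟩ => h1 ⟨c, htrans hc (hsymm hs)⟩
        simp only [dif_neg h1, dif_neg h2]
    · intro a b c hc
      have h1 : ∃ c : P, Θ (emb c) (emb a ⊓ emb b) := ⟨c, hc⟩
      show (if h : ∃ c : P, Θ (emb c) (emb a ⊓ emb b) then
        some (Quotient.mk st h.choose) else none) = some (Quotient.mk st c)
      rw [dif_pos h1]
      exact congrArg some (Quotient.sound ((hst _ _).2 (htrans h1.choose_spec (hsymm hc))))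
    · intro a b hn
      show (if h : ∃ c : P, Θ (emb c) (emb a ⊓ emb b) then
        some (Quotient.mk st h.choose) else none) = none
      exact dif_neg (not_exists.2 hn)
  refine ⟨J, M, ?_, ?_, ?_⟩
  · intro a b s hs
    have hseq : s = emb a ⊔ emb b := hs.unique isLUB_pair
    subst hseq
    exact ⟨fun c hc => hJs a b c hc, fun hn => hJn a b hn⟩
  · intro a b s hs
    have hseq : s = emb a ⊓ emb b := hs.unique isGLB_pair
    subst hseq
    exact ⟨fun c hc => hMs a b c hc, fun hn => hMn a b hn⟩
  constructor
  · intro q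
    refine Quotient.inductionOn q (fun a => ?_)
    exact hJs a a a (by rw [sup_idem]; exact hrefl _)
  · intro q
    refine Quotient.inductionOn q (fun a => ?_)
    exact hMs a a a (by rw [inf_idem]; exact hrefl _)
  · intro q r
    refine Quotient.inductionOn₂ q r (fun a b => ?_)
    by_cases h : ∃ c : P, Θ (emb c) (emb a ⊔ emb b)
    · obtain ⟨c, hc⟩ := h
      rw [hJs a b c hc, hJs b a c (by rwa [sup_comm])]
    · rw [hJn a b (fun c hc => h ⟨c, hc⟩), hJn b a (fun c hc => h ⟨c, by rwa [sup_comm] at hc⟩)]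
  · intro q r
    refine Quotient.inductionOn₂ q r (fun a b => ?_)
    by_cases h : ∃ c : P, Θ (emb c) (emb a ⊓ emb b)
    · obtain ⟨c, hc⟩ := h
      rw [hMs a b c hc, hMs b a c (by rwa [inf_comm])]
    · rw [hMn a b (fun c hc => h ⟨c, hc⟩), hMn b a (fun c hc => h ⟨c, by rwa [inf_comm] at hc⟩)]
  · intro q r t
    refine Quotient.inductionOn₃ q r t (fun a b c => ?_)
    by_cases h₁ : ∃ e : P, Θ (emb e) (emb a ⊔ emb b ⊔ emb c)
    · obtain ⟨e, he⟩ := h₁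
      obtain ⟨d, hd⟩ := keyJoin a b (emb a ⊔ emb b ⊔ emb c) le_sup_left ⟨e, he⟩
      obtain ⟨d', hd'⟩ := keyJoin b c (emb a ⊔ emb b ⊔ emb c)
        (sup_le (le_sup_of_le_left le_sup_right) le_sup_right) ⟨e, he⟩
      have h2 : Θ (emb d ⊔ emb c) (emb a ⊔ emb b ⊔ emb c) := congSup hd (hrefl _)
      have h3 : Θ (emb a ⊔ emb d') (emb a ⊔ emb b ⊔ emb c) := by
        have h4 := congSup (hrefl (emb a)) hd'
        rwa [← sup_assoc] at h4
      rw [hJs a b d hd, hJs b c d' hd']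
      show J (Quotient.mk st d) (Quotient.mk st c) = J (Quotient.mk st a) (Quotient.mk st d')
      rw [hJs d c e (htrans he (hsymm h2)), hJs a d' e (htrans he (hsymm h3))]
    · have hLHS : (J (Quotient.mk st a) (Quotient.mk st b)).bind
          (fun d => J d (Quotient.mk st c)) = none := by
        by_cases hab : ∃ d : P, Θ (emb d) (emb a ⊔ emb b)
        · obtain ⟨d, hd⟩ := hab
          rw [hJs a b d hd]
          show J (Quotient.mk st d) (Quotient.mk st c) = none
          exact hJn d c fun e hedc => h₁ ⟨e, htrans hedc (congSup hd (hrefl _))⟩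
        · rw [hJn a b fun d hd => hab ⟨d, hd⟩]
          rfl
      have hRHS : (J (Quotient.mk st b) (Quotient.mk st c)).bind
          (fun d => J (Quotient.mk st a) d) = none := by
        by_cases hbc : ∃ d : P, Θ (emb d) (emb b ⊔ emb c)
        · obtain ⟨d, hd⟩ := hbc
          rw [hJs b c d hd]
          show J (Quotient.mk st a) (Quotient.mk st d) = none
          refine hJn a d fun e head => h₁ ⟨e, htrans head ?_⟩
          have h4 := congSup (hrefl (emb a)) hd
          rwa [← sup_assoc] at h4
        · rw [hJn b c fun d hd => hbc ⟨d, hd⟩]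
          rfl
      rw [hLHS, hRHS]
  · intro q r t
    refine Quotient.inductionOn₃ q r t (fun a b c => ?_)
    by_cases h₁ : ∃ e : P, Θ (emb e) (emb a ⊓ emb b ⊓ emb c)
    · obtain ⟨e, he⟩ := h₁
      obtain ⟨d, hd⟩ := keyMeet a b (emb a ⊓ emb b ⊓ emb c) inf_le_left ⟨e, he⟩
      obtain ⟨d', hd'⟩ := keyMeet b c (emb a ⊓ emb b ⊓ emb c)
        (le_inf (inf_le_of_left_le inf_le_right) inf_le_right) ⟨e, he⟩
      have h2 : Θ (emb d ⊓ emb c) (emb a ⊓ emb b ⊓ emb c) := congInf hd (hrefl _)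
      have h3 : Θ (emb a ⊓ emb d') (emb a ⊓ emb b ⊓ emb c) := by
        have h4 := congInf (hrefl (emb a)) hd'
        rwa [← inf_assoc] at h4
      rw [hMs a b d hd, hMs b c d' hd']
      show M (Quotient.mk st d) (Quotient.mk st c) = M (Quotient.mk st a) (Quotient.mk st d')
      rw [hMs d c e (htrans he (hsymm h2)), hMs a d' e (htrans he (hsymm h3))]
    · have hLHS : (M (Quotient.mk st a) (Quotient.mk st b)).bind
          (fun d => M d (Quotient.mk st c)) = none := by
        by_cases hab : ∃ d : P, Θ (emb d) (emb a ⊓ emb b)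
        · obtain ⟨d, hd⟩ := hab
          rw [hMs a b d hd]
          show M (Quotient.mk st d) (Quotient.mk st c) = none
          exact hMn d c fun e hedc => h₁ ⟨e, htrans hedc (congInf hd (hrefl _))⟩
        · rw [hMn a b fun d hd => hab ⟨d, hd⟩]
          rfl
      have hRHS : (M (Quotient.mk st b) (Quotient.mk st c)).bind
          (fun d => M (Quotient.mk st a) d) = none := by
        by_cases hbc : ∃ d : P, Θ (emb d) (emb b ⊓ emb c)
        · obtain ⟨d, hd⟩ := hbc
          rw [hMs b c d hd]
          show M (Quotient.mk st a) (Quotient.mk st d) = none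
          refine hMn a d fun e head => h₁ ⟨e, htrans head ?_⟩
          have h4 := congInf (hrefl (emb a)) hd
          rwa [← inf_assoc] at h4
        · rw [hMn b c fun d hd => hbc ⟨d, hd⟩]
          rfl
      rw [hLHS, hRHS]
  · intro q r
    refine Quotient.inductionOn₂ q r (fun a b h => ?_)
    by_cases hab : ∃ c : P, Θ (emb c) (emb a ⊔ emb b)
    · obtain ⟨c, hc⟩ := hab
      rw [hJs a b c hc] at h
      have hmk : Quotient.mk st c = Quotient.mk st a := Option.some.inj h
      have hca : Θ (emb c) (emb a) := (hst c a).1 (Quotient.exact hmk)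
      have ha : Θ (emb a) (emb a ⊔ emb b) := htrans (hsymm hca) hc
      have h2 : Θ (emb a ⊓ emb b) ((emb a ⊔ emb b) ⊓ emb b) := congInf ha (hrefl _)
      have h5 : (emb a ⊔ emb b) ⊓ emb b = emb b := inf_eq_right.2 le_sup_right
      rw [h5] at h2
      exact hMs a b b (hsymm h2)
    · rw [hJn a b fun c hc => hab ⟨c, hc⟩] at h
      exact absurd h (by simp)
  · intro q r
    refine Quotient.inductionOn₂ q r (fun a b h => ?_)
    by_cases hab : ∃ c : P, Θ (emb c) (emb a ⊓ emb b)
    · obtain ⟨c, hc⟩ := hab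
      rw [hMs a b c hc] at h
      have hmk : Quotient.mk st c = Quotient.mk st a := Option.some.inj h
      have hca : Θ (emb c) (emb a) := (hst c a).1 (Quotient.exact hmk)
      have ha : Θ (emb a) (emb a ⊓ emb b) := htrans (hsymm hca) hc
      have h2 : Θ (emb a ⊔ emb b) ((emb a ⊓ emb b) ⊔ emb b) := congSup ha (hrefl _)
      have h5 : (emb a ⊓ emb b) ⊔ emb b = emb b := sup_eq_right.2 inf_le_right
      rw [h5] at h2
      exact hJs a b b (hsymm h2)
    · rw [hMn a b fun c hc => hab ⟨c, hc⟩] at h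
      exact absurd h (by simp)
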